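/- Let R be a regular language and L a finite language over an alphabet Σ. Then the languages R ←max-sdi L, R ←min-sdi L, L ←max-sdi R, and L ←min-sdi R are all regular. -/

import Mathlib

/-- Site-directed insertion (SDI) of string `y` into string `x`. -/
def sdiStr {α : Type} (x y : List α) : Set (List α) :=
  { w | ∃ x₁ u z v x₂ : List α,
      x = x₁ ++ u ++ v ++ x₂ ∧ y = u ++ z ++ v ∧ u ≠ [] ∧ v ≠ [] ∧
      w = x₁ ++ u ++ z ++ v ++ x₂ }

/-- Site-directed insertion extended to languages. -/
def sdiLang {α : Type} (L₁ L₂ : Set (List α)) : Set (List α) :=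
  { w | ∃ x ∈ L₁, ∃ y ∈ L₂, w ∈ sdiStr x y }

/-- Alphabetic site-directed insertion of string `y` into string `x`. -/
def asdiStr {α : Type} (x y : List α) : Set (List α) :=
  { w | ∃ (x₁ x₂ z : List α) (a b : α),
      x = x₁ ++ [a] ++ [b] ++ x₂ ∧ y = [a] ++ z ++ [b] ∧
      w = x₁ ++ [a] ++ z ++ [b] ++ x₂ }

/-- Alphabetic site-directed insertion extended to languages. -/
def asdiLang {α : Type} (L₁ L₂ : Set (List α)) : Set (List α) :=
  { w | ∃ x ∈ L₁, ∃ y ∈ L₂, w ∈ asdiStr x y }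

/-- Maximal site-directed insertion of string `y` into string `x`. -/
def maxSdiStr {α : Type} (x y : List α) : Set (List α) :=
  { w | ∃ x₁ u z v x₂ : List α,
      x = x₁ ++ u ++ v ++ x₂ ∧ y = u ++ z ++ v ∧ u ≠ [] ∧ v ≠ [] ∧
      w = x₁ ++ u ++ z ++ v ++ x₂ ∧
      ¬ ∃ x₁' x₂' z' : List α, x₁' <:+ x₁ ∧ x₂' <+: x₂ ∧
          x₁' ++ x₂' ≠ [] ∧ y = x₁' ++ u ++ z' ++ v ++ x₂' }

/-- Maximal site-directed insertion extended to languages. -/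
def maxSdiLang {α : Type} (L₁ L₂ : Set (List α)) : Set (List α) :=
  { w | ∃ x ∈ L₁, ∃ y ∈ L₂, w ∈ maxSdiStr x y }

/-- Minimal site-directed insertion of string `y` into string `x`:
the words `u` and `v` of the matched outfix must be unbordered. -/
def minSdiStr {α : Type} (x y : List α) : Set (List α) :=
  { w | ∃ x₁ u z v x₂ : List α,
      x = x₁ ++ u ++ v ++ x₂ ∧ y = u ++ z ++ v ∧ u ≠ [] ∧ v ≠ [] ∧
      w = x₁ ++ u ++ z ++ v ++ x₂ ∧
      (∀ s : List α, s <:+ u → s ≠ [] → s ≠ u → ¬ s <+: u) ∧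
      (∀ p : List α, p <+: v → p ≠ [] → p ≠ v → ¬ p <:+ v) }

/-- Minimal site-directed insertion extended to languages. -/
def minSdiLang {α : Type} (L₁ L₂ : Set (List α)) : Set (List α) :=
  { w | ∃ x ∈ L₁, ∃ y ∈ L₂, w ∈ minSdiStr x y }

namespace SdiReg

open Language

variable {α : Type}

/-- Any DFA with finite (possibly large-universe) state type gives regularity. -/
theorem isRegular_of_dfa {σ : Type*} [Fintype σ] (M : DFA α σ) :
    M.accepts.IsRegular := by
  refine ⟨Fin (Fintype.card σ), inferInstance, DFA.reindex (Fintype.equivFin σ) M, ?_⟩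
  rw [DFA.accepts_reindex]

theorem isRegular_compl {L : Language α} (h : L.IsRegular) :
    Language.IsRegular (Lᶜ : Set (List α)) := by
  obtain ⟨σ, ft, M, rfl⟩ := h
  have he : (DFA.mk M.step M.start M.acceptᶜ : DFA α σ).accepts
      = ((M.accepts : Set (List α))ᶜ : Set (List α)) := by
    ext x
    exact Iff.rfl
  exact he ▸ isRegular_of_dfa _

private def piDFA {ι : Type} {σ : ι → Type*} (M : ∀ i, DFA α (σ i))
    (acc : Set (∀ i, σ i)) : DFA α (∀ i, σ i) :=
  ⟨fun s a i => (M i).step (s i) a, fun i => (M i).start, acc⟩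

private theorem piDFA_evalFrom {ι : Type} {σ : ι → Type*} (M : ∀ i, DFA α (σ i))
    (acc : Set (∀ i, σ i)) (s : ∀ i, σ i) (x : List α) :
    (piDFA M acc).evalFrom s x = fun i => (M i).evalFrom (s i) x := by
  induction x generalizing s with
  | nil => rfl
  | cons a x ih => simpa [DFA.evalFrom, piDFA] using ih _

private theorem piDFA_mem_accepts {ι : Type} {σ : ι → Type*} (M : ∀ i, DFA α (σ i))
    (acc : Set (∀ i, σ i)) (x : List α) :
    x ∈ (piDFA M acc).accepts ↔ (fun i => (M i).eval x) ∈ acc := by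
  rw [DFA.mem_accepts]
  show (piDFA M acc).evalFrom (fun i => (M i).start) x ∈ acc ↔ _
  rw [piDFA_evalFrom]
  exact Iff.rfl

theorem isRegular_iUnion {ι : Type} [Finite ι] {f : ι → Language α}
    (h : ∀ i, (f i).IsRegular) :
    Language.IsRegular (⋃ i, (f i : Set (List α))) := by
  choose σ ft M hM using h
  haveI : ∀ i, Fintype (σ i) := ft
  haveI : Fintype (∀ i, σ i) := Fintype.ofFinite _
  have he : (piDFA M {s | ∃ i, s i ∈ (M i).accept}).accepts
      = (⋃ i, (f i : Set (List α)) : Set (List α)) := by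
    ext x
    rw [piDFA_mem_accepts]; refine Iff.trans ?_ Set.mem_iUnion.symm
    simp only [← hM]
    exact Iff.rfl
  exact he ▸ isRegular_of_dfa _

theorem isRegular_iInter {ι : Type} [Finite ι] {f : ι → Language α}
    (h : ∀ i, (f i).IsRegular) :
    Language.IsRegular (⋂ i, (f i : Set (List α))) := by
  choose σ ft M hM using h
  haveI : ∀ i, Fintype (σ i) := ft
  haveI : Fintype (∀ i, σ i) := Fintype.ofFinite _
  have he : (piDFA M {s | ∀ i, s i ∈ (M i).accept}).accepts
      = (⋂ i, (f i : Set (List α)) : Set (List α)) := by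
    ext x
    rw [piDFA_mem_accepts]; refine Iff.trans ?_ Set.mem_iInter.symm
    simp only [← hM]
    exact Iff.rfl
  exact he ▸ isRegular_of_dfa _

theorem isRegular_biUnion {β : Type} {s : Set β} (hs : s.Finite) {f : β → Language α}
    (h : ∀ i ∈ s, (f i).IsRegular) :
    Language.IsRegular (⋃ i ∈ s, (f i : Set (List α))) := by
  haveI := hs.to_subtype
  have key : (⋃ i ∈ s, (f i : Set (List α))) = ⋃ i : s, (f i : Set (List α)) :=
    Set.biUnion_eq_iUnion s (fun i _ => (f i : Set (List α)))
  exact (congrArg Language.IsRegular key).mpr (isRegular_iUnion fun i => h i i.2)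

theorem isRegular_biInter {β : Type} {s : Set β} (hs : s.Finite) {f : β → Language α}
    (h : ∀ i ∈ s, (f i).IsRegular) :
    Language.IsRegular (⋂ i ∈ s, (f i : Set (List α))) := by
  haveI := hs.to_subtype
  have key : (⋂ i ∈ s, (f i : Set (List α))) = ⋂ i : s, (f i : Set (List α)) :=
    Set.biInter_eq_iInter s (fun i _ => (f i : Set (List α)))
  exact (congrArg Language.IsRegular key).mpr (isRegular_iInter fun i => h i i.2)

theorem isRegular_inter {L₁ L₂ : Language α} (h₁ : L₁.IsRegular) (h₂ : L₂.IsRegular) :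
    Language.IsRegular (L₁ ∩ L₂ : Set (List α)) := by
  have : (L₁ ∩ L₂ : Set (List α)) = ⋂ b : Bool, (bif b then L₁ else L₂ : Set (List α)) := by
    ext x; exact ⟨fun h => Set.mem_iInter.mpr (by rintro (_ | _); exacts [h.2, h.1]),
      fun h => ⟨Set.mem_iInter.mp h true, Set.mem_iInter.mp h false⟩⟩
  rw [this]
  exact isRegular_iInter (by rintro (_ | _) <;> simpa)

theorem isRegular_top : Language.IsRegular (Set.univ : Set (List α)) := by
  have he : (DFA.mk (fun _ _ => ()) () Set.univ : DFA α Unit).accepts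
      = (Set.univ : Set (List α)) := by
    ext x; simp [DFA.mem_accepts]; trivial
  exact he ▸ isRegular_of_dfa _

section Concat

variable {α : Type} {σ₁ σ₂ : Type*} (A : DFA α σ₁) (B : DFA α σ₂)

private def catNFA : NFA α (σ₁ ⊕ σ₂) where
  step q a :=
    match q with
    | .inl s => {q' | q' = .inl (A.step s a) ∨ (s ∈ A.accept ∧ q' = .inr (B.step B.start a))}
    | .inr t => {q' | q' = .inr (B.step t a)}
  start := {.inl A.start}
  accept := {q | (∃ t ∈ B.accept, q = .inr t) ∨ (∃ s ∈ A.accept, q = .inl s ∧ B.start ∈ B.accept)}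

private theorem catNFA_eval (w : List α) :
    (catNFA A B).eval w =
      {q | q = .inl (A.eval w) ∨
        ∃ x y, w = x ++ y ∧ y ≠ [] ∧ x ∈ A.accepts ∧ q = .inr (B.eval y)} := by
  induction w using List.reverseRecOn with
  | nil =>
    ext q
    simp only [NFA.eval_nil, catNFA, Set.mem_setOf_eq, Set.mem_singleton_iff]
    constructor
    · rintro rfl; exact Or.inl rfl
    · rintro (rfl | ⟨x, y, hxy, hy, _, _⟩)
      · rfl
      · exact absurd (List.append_eq_nil_iff.mp hxy.symm).2 hy
  | append_singleton w a ih =>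
    ext q
    rw [NFA.eval_append_singleton, NFA.mem_stepSet]
    simp only [ih, Set.mem_setOf_eq]
    constructor
    · rintro ⟨p, hp, hq⟩
      rcases hp with rfl | ⟨x, y, rfl, hy, hx, rfl⟩
      · simp only [catNFA, Set.mem_setOf_eq] at hq
        rcases hq with rfl | ⟨hacc, rfl⟩
        · exact Or.inl (by rw [DFA.eval_append_singleton])
        · refine Or.inr ⟨w, [a], rfl, by simp, ?_, by rw [DFA.eval_singleton]⟩
          rw [DFA.mem_accepts]; exact hacc
      · simp only [catNFA, Set.mem_setOf_eq] at hq
        subst hq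
        refine Or.inr ⟨x, y ++ [a], by rw [List.append_assoc], by simp, hx, ?_⟩
        rw [DFA.eval_append_singleton]
    · rintro (rfl | ⟨x, y, hxy, hy, hx, rfl⟩)
      · refine ⟨.inl (A.eval w), Or.inl rfl, ?_⟩
        simp only [catNFA, Set.mem_setOf_eq]
        exact Or.inl (by rw [DFA.eval_append_singleton])
      · rcases y.eq_nil_or_concat with rfl | ⟨y', b, rfl⟩
        · exact absurd rfl hy
        · rw [List.concat_eq_append, ← List.append_assoc] at hxy
          obtain ⟨h1, h2⟩ := List.append_inj' hxy rfl
          obtain rfl : a = b := by injection h2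
          rcases eq_or_ne y' [] with rfl | hy'
          · rw [List.append_nil] at h1
            refine ⟨.inl (A.eval w), Or.inl rfl, ?_⟩
            simp only [catNFA, Set.mem_setOf_eq]
            refine Or.inr ⟨?_, ?_⟩
            · rw [h1]; exact (DFA.mem_accepts _).mp hx
            · rw [List.concat_eq_append, List.nil_append, DFA.eval_singleton]
          · refine ⟨.inr (B.eval y'), Or.inr ⟨x, y', h1, hy', hx, rfl⟩, ?_⟩
            simp only [catNFA, Set.mem_setOf_eq]
            rw [List.concat_eq_append, DFA.eval_append_singleton]

private theorem catNFA_accepts : (catNFA A B).accepts = A.accepts * B.accepts := by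
  ext w
  rw [NFA.mem_accepts, Language.mem_mul]
  constructor
  · rintro ⟨q, hq, hqe⟩
    have hqe' : q ∈ (catNFA A B).eval w := hqe
    rw [catNFA_eval, Set.mem_setOf_eq] at hqe'
    rcases hq with ⟨t, ht, rfl⟩ | ⟨s, hs, rfl, hB0⟩
    · rcases hqe' with h | ⟨x, y, rfl, hy, hx, h⟩
      · exact absurd h (by simp)
      · obtain rfl : t = B.eval y := by injection h
        exact ⟨x, hx, y, (B.mem_accepts).mpr ht, rfl⟩
    · rcases hqe' with h | ⟨x, y, rfl, hy, hx, h⟩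
      · obtain rfl : s = A.eval w := by injection h
        exact ⟨w, (A.mem_accepts).mpr hs, [], (B.mem_accepts).mpr hB0, List.append_nil w⟩
      · exact absurd h (by simp)
  · rintro ⟨x, hx, y, hy, rfl⟩
    rcases eq_or_ne y [] with rfl | hne
    · refine ⟨.inl (A.eval (x ++ [])), Or.inr ⟨A.eval (x ++ []), ?_, rfl, ?_⟩, ?_⟩
      · rw [List.append_nil]; exact (A.mem_accepts).mp hx
      · exact (B.mem_accepts).mp hy
      · show _ ∈ (catNFA A B).eval _
        rw [catNFA_eval]; exact Or.inl rfl
    · refine ⟨.inr (B.eval y), Or.inl ⟨B.eval y, (B.mem_accepts).mp hy, rfl⟩, ?_⟩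
      show _ ∈ (catNFA A B).eval _
      rw [catNFA_eval]
      exact Or.inr ⟨x, y, rfl, hne, hx, rfl⟩

end Concat

theorem isRegular_mul {α : Type} {L₁ L₂ : Language α} (h₁ : L₁.IsRegular)
    (h₂ : L₂.IsRegular) : (L₁ * L₂).IsRegular := by
  obtain ⟨σ₁, ft₁, A, rfl⟩ := h₁
  obtain ⟨σ₂, ft₂, B, rfl⟩ := h₂
  haveI : Fintype (Set (σ₁ ⊕ σ₂)) := Fintype.ofFinite _
  have := isRegular_of_dfa (catNFA A B).toDFA
  rwa [NFA.toDFA_correct, catNFA_accepts] at this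


section Atoms

variable {α : Type}

def univL : Language α := Set.univ

theorem isRegular_univL : Language.IsRegular (univL : Language α) := isRegular_top

theorem isRegular_epsilon : Language.IsRegular ({[]} : Set (List α)) := by
  have he : (DFA.mk (fun _ _ => false) true {q | q = true} : DFA α Bool).accepts
      = ({[]} : Set (List α)) := by
    have hfalse : ∀ x : List α,
        (DFA.mk (fun _ _ => false) true {q | q = true} : DFA α Bool).evalFrom false x = false := by
      intro x; induction x with
      | nil => rfl
      | cons a l ih => exact ih
    ext x
    cases x with
    | nil =>
      simp only [DFA.mem_accepts]
      constructor
      · intro _; rfl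
      · intro _; rfl
    | cons a l =>
      rw [DFA.mem_accepts]
      show (DFA.mk (fun _ _ => false) true {q | q = true} : DFA α Bool).evalFrom false l ∈ _ ↔ _
      rw [hfalse]
      constructor
      · intro h; exact absurd h (by simp)
      · intro h; exact absurd (Set.mem_singleton_iff.mp h) (List.cons_ne_nil a l)
  exact he ▸ isRegular_of_dfa _

open Classical in
private noncomputable def charDFA (a : α) : DFA α (Option Bool) where
  step s c := if s = some true ∧ c = a then some false else none
  start := some true
  accept := {s | s = some false}

private theorem charDFA_none (a : α) : ∀ x : List α, (charDFA a).evalFrom none x = none := by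
  intro x
  induction x with
  | nil => rfl
  | cons c l ih =>
    have hstep : (charDFA a).step none c = none := by simp [charDFA]
    show (charDFA a).evalFrom ((charDFA a).step none c) l = none
    rw [hstep]; exact ih

theorem isRegular_char (a : α) : Language.IsRegular ({[a]} : Set (List α)) := by
  have he : (charDFA a).accepts = ({[a]} : Set (List α)) := by
    ext x
    rw [DFA.mem_accepts]
    match x with
    | [] =>
      show some true ∈ _ ↔ _
      constructor
      · intro h
        have hh : (some true : Option Bool) = some false := h
        simp at hh
      · intro h; exact absurd (Set.mem_singleton_iff.mp h) (by simp)
    | [c] =>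
      show (charDFA a).step (some true) c ∈ _ ↔ _
      by_cases hc : c = a
      · subst hc
        have : (charDFA c).step (some true) c = some false := by simp [charDFA]
        rw [this]
        constructor
        · intro _; rfl
        · intro _; rfl
      · have : (charDFA a).step (some true) c = none := by simp [charDFA, hc]
        rw [this]
        constructor
        · intro h
          have hh : (none : Option Bool) = some false := h
          simp at hh
        · intro h
          exact absurd (Set.mem_singleton_iff.mp h) (by simp [hc])
    | c :: d :: l =>
      show (charDFA a).evalFrom ((charDFA a).step ((charDFA a).step (some true) c) d) l ∈ _ ↔ _
      have h2 : (charDFA a).step ((charDFA a).step (some true) c) d = none := by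
        by_cases hc : c = a <;> simp [charDFA, hc]
      rw [h2, charDFA_none]
      constructor
      · intro h
        have hh : (none : Option Bool) = some false := h
        simp at hh
      · intro h; exact absurd (Set.mem_singleton_iff.mp h) (by simp)
  exact he ▸ isRegular_of_dfa _

theorem isRegular_single (w : List α) : Language.IsRegular ({w} : Set (List α)) := by
  induction w with
  | nil => exact isRegular_epsilon
  | cons a l ih =>
    have he : ({a :: l} : Set (List α))
        = (({[a]} : Language α) * ({l} : Language α) : Set (List α)) := by
      ext x
      simp only [Set.mem_singleton_iff]
      refine Iff.trans ?_ Language.mem_mul.symm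
      constructor
      · rintro rfl; exact ⟨[a], rfl, l, rfl, rfl⟩
      · rintro ⟨p, hp, q, hq, rfl⟩
        change p = [a] at hp; change q = l at hq  -- may need adjusting
        rw [hp, hq]; rfl
    rw [he]
    exact isRegular_mul (isRegular_char a) ih

theorem isRegular_hasSuffix (s : List α) : Language.IsRegular {x : List α | s <:+ x} := by
  have he : {x : List α | s <:+ x}
      = ((univL : Language α) * ({s} : Language α) : Set (List α)) := by
    ext x
    rw [Set.mem_setOf_eq]; refine Iff.trans ?_ Language.mem_mul.symm
    constructor
    · rintro ⟨t, rfl⟩; exact ⟨t, trivial, s, rfl, rfl⟩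
    · rintro ⟨p, _, q, hq, rfl⟩
      change q = s at hq
      exact ⟨p, by rw [hq]⟩
  rw [he]
  exact isRegular_mul isRegular_univL (isRegular_single s)

theorem isRegular_hasPrefix (p : List α) : Language.IsRegular {x : List α | p <+: x} := by
  have he : {x : List α | p <+: x}
      = (({p} : Language α) * (univL : Language α) : Set (List α)) := by
    ext x
    rw [Set.mem_setOf_eq]; refine Iff.trans ?_ Language.mem_mul.symm
    constructor
    · rintro ⟨t, rfl⟩; exact ⟨p, rfl, t, trivial, rfl⟩
    · rintro ⟨q, hq, t, _, rfl⟩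
      change q = p at hq
      exact ⟨t, by rw [hq]⟩
  rw [he]
  exact isRegular_mul (isRegular_single p) isRegular_univL

end Atoms

section Decomp

variable {α : Type}

/-- Decompositions `y = u ++ z ++ v` with `u, v` nonempty. -/
def Dset (y : List α) : Set (List α × List α × List α) :=
  {t | y = t.1 ++ t.2.1 ++ t.2.2 ∧ t.1 ≠ [] ∧ t.2.2 ≠ []}

/-- "Bad pairs" for maximality. -/
def Pset (y u v : List α) : Set (List α × List α) :=
  {p | p.1 ++ p.2 ≠ [] ∧ ∃ z', y = p.1 ++ u ++ z' ++ v ++ p.2}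

/-- Decompositions `x = x₁ ++ u ++ v ++ x₂` with `u, v` nonempty. -/
def Eset (x : List α) : Set (List α × List α × List α × List α) :=
  {t | x = t.1 ++ t.2.1 ++ t.2.2.1 ++ t.2.2.2 ∧ t.2.1 ≠ [] ∧ t.2.2.1 ≠ []}

/-- "Bad pairs" for maximality in the other direction. -/
def Qset (x₁ x₂ : List α) : Set (List α × List α) :=
  {p | p.1 <:+ x₁ ∧ p.2 <+: x₂ ∧ p.1 ++ p.2 ≠ []}

theorem finite_Dset (y : List α) : (Dset y).Finite := by
  apply Set.Finite.subset
    ((y.sublists.finite_toSet).prod ((y.sublists.finite_toSet).prod y.sublists.finite_toSet))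
  rintro ⟨u, z, v⟩ ⟨h, -, -⟩
  refine ⟨?_, ?_, ?_⟩ <;> show _ ∈ List.sublists _ <;> rw [List.mem_sublists]
  · exact (show u <+: y from ⟨z ++ v, by rw [h, List.append_assoc]⟩).sublist
  · exact (show z <:+: y from ⟨u, v, h.symm⟩).sublist
  · exact (show v <:+ y from ⟨u ++ z, h.symm⟩).sublist

theorem finite_Pset (y u v : List α) : (Pset y u v).Finite := by
  apply Set.Finite.subset ((y.sublists.finite_toSet).prod y.sublists.finite_toSet)
  rintro ⟨a, b⟩ ⟨-, z', h⟩
  refine ⟨?_, ?_⟩ <;> show _ ∈ List.sublists _ <;> rw [List.mem_sublists]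
  · exact (show a <+: y from ⟨u ++ z' ++ v ++ b, by rw [h]; simp [List.append_assoc]⟩).sublist
  · exact (show b <:+ y from ⟨a ++ u ++ z' ++ v, h.symm⟩).sublist

theorem finite_Eset (x : List α) : (Eset x).Finite := by
  apply Set.Finite.subset ((x.sublists.finite_toSet).prod
    ((x.sublists.finite_toSet).prod ((x.sublists.finite_toSet).prod x.sublists.finite_toSet)))
  rintro ⟨x₁, u, v, x₂⟩ ⟨h, -, -⟩
  refine ⟨?_, ?_, ?_, ?_⟩ <;> show _ ∈ List.sublists _ <;> rw [List.mem_sublists]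
  · exact (show x₁ <+: x from ⟨u ++ v ++ x₂, by rw [h]; simp [List.append_assoc]⟩).sublist
  · exact (show u <:+: x from ⟨x₁, v ++ x₂, by rw [h]; simp [List.append_assoc]⟩).sublist
  · exact (show v <:+: x from ⟨x₁ ++ u, x₂, by rw [h]⟩).sublist
  · exact (show x₂ <:+ x from ⟨x₁ ++ u ++ v, h.symm⟩).sublist

theorem finite_Qset (x₁ x₂ : List α) : (Qset x₁ x₂).Finite := by
  apply Set.Finite.subset ((x₁.sublists.finite_toSet).prod x₂.sublists.finite_toSet)
  rintro ⟨a, b⟩ ⟨ha, hb, -⟩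
  refine ⟨?_, ?_⟩ <;> show _ ∈ List.sublists _ <;> rw [List.mem_sublists]
  · exact ha.sublist
  · exact hb.sublist

end Decomp

theorem mem_iUnion_lang {ι : Sort*} {f : ι → Language α} {x : List α} :
    x ∈ (⋃ i, (f i : Set (List α))) ↔ ∃ i, x ∈ f i := Set.mem_iUnion

theorem mem_single_iff {a b : List α} : a ∈ ({b} : Language α) ↔ a = b := Iff.rfl

section Single

variable {α : Type} {σ : Type} (M : DFA α σ)

/-- Left factor of a piece for maximal SDI. -/
def Amax (q : σ) (T : Set (List α × List α)) : Language α :=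
  {x₁ | M.eval x₁ = q ∧ ∀ p ∈ T, ¬ p.1 <:+ x₁}

/-- Right factor of a piece for maximal SDI. -/
def Bmax (q : σ) (y u v : List α) (T : Set (List α × List α)) : Language α :=
  {x₂ | M.evalFrom (M.evalFrom q (u ++ v)) x₂ ∈ M.accept ∧ ∀ p ∈ Pset y u v \ T, ¬ p.2 <+: x₂}

/-- One piece of the decomposition of maximal SDI into a regular language. -/
def pieceMax (y u v : List α) (T : Set (List α × List α)) (q : σ) : Language α :=
  Amax M q T * (({y} : Language α) * Bmax M q y u v T)

theorem maxSdi_single_eq (y : List α) :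
    {w | ∃ x ∈ M.accepts, w ∈ maxSdiStr x y} =
      ⋃ d ∈ Dset y, ⋃ T ∈ {T | T ⊆ Pset y d.1 d.2.2}, ⋃ q : σ,
        (pieceMax M y d.1 d.2.2 T q : Set (List α)) := by
  ext w
  simp only [Set.mem_setOf_eq, Set.mem_iUnion, mem_iUnion_lang]
  constructor
  · rintro ⟨x, hx, x₁, u, z, v, x₂, hX, hY, hu, hv, hw, hmax⟩
    refine ⟨(u, z, v), ⟨hY, hu, hv⟩, {p | p ∈ Pset y u v ∧ ¬ p.1 <:+ x₁}, fun p hp => hp.1,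
      M.eval x₁, ?_⟩
    rw [pieceMax, Language.mem_mul]
    refine ⟨x₁, ⟨rfl, fun p hp => hp.2⟩, y ++ x₂, ?_, ?_⟩
    · rw [Language.mem_mul]
      refine ⟨y, rfl, x₂, ⟨?_, ?_⟩, rfl⟩
      · have hEv : M.eval x = M.evalFrom (M.evalFrom (M.eval x₁) (u ++ v)) x₂ := by
          rw [hX]
          show M.evalFrom M.start (x₁ ++ u ++ v ++ x₂) = _
          rw [show x₁ ++ u ++ v ++ x₂ = (x₁ ++ (u ++ v)) ++ x₂ by simp [List.append_assoc],
            DFA.evalFrom_of_append, DFA.evalFrom_of_append]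
          rfl
        rw [← hEv]
        exact (M.mem_accepts).mp hx
      · rintro p ⟨hp1, hp2⟩ hpre
        have hsuf : p.1 <:+ x₁ := by
          by_contra hno
          exact hp2 ⟨hp1, hno⟩
        obtain ⟨hne, z', hz'⟩ := hp1
        exact hmax ⟨p.1, p.2, z', hsuf, hpre, hne, hz'⟩
    · rw [hw, hY]
      simp [List.append_assoc]
  · rintro ⟨⟨u, z, v⟩, ⟨hyd, hu, hv⟩, T, hT, q, hmem⟩
    rw [pieceMax, Language.mem_mul] at hmem
    obtain ⟨x₁, hx₁, b, hb, hw⟩ := hmem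
    simp only [Amax, Set.mem_setOf_eq] at hx₁
    rw [Language.mem_mul] at hb
    obtain ⟨m, hm, x₂, hx₂, hbeq⟩ := hb
    simp only [Bmax, Set.mem_setOf_eq] at hx₂
    rw [mem_single_iff] at hm
    subst hm
    obtain ⟨hq, hTs⟩ := hx₁
    obtain ⟨hacc, hPp⟩ := hx₂
    subst hbeq
    subst hw
    refine ⟨x₁ ++ u ++ v ++ x₂, ?_, x₁, u, z, v, x₂, rfl, hyd, hu, hv, ?_, ?_⟩
    · rw [M.mem_accepts]
      show M.evalFrom M.start (x₁ ++ u ++ v ++ x₂) ∈ _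
      rw [show x₁ ++ u ++ v ++ x₂ = (x₁ ++ (u ++ v)) ++ x₂ by simp [List.append_assoc],
        DFA.evalFrom_of_append, DFA.evalFrom_of_append]
      rw [show M.evalFrom M.start x₁ = q from hq]
      exact hacc
    · rw [hyd]
      simp [List.append_assoc]
    · rintro ⟨a, b', z', ha, hb', hne, heq⟩
      by_cases hmemT : (a, b') ∈ T
      · exact hTs (a, b') hmemT ha
      · exact hPp (a, b') ⟨⟨hne, z', heq⟩, hmemT⟩ hb'

end Single

section Single2

variable {α : Type} {σ : Type} (M : DFA α σ)

/-- Unbordered-suffix condition. -/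
def UnbU (u : List α) : Prop := ∀ s : List α, s <:+ u → s ≠ [] → s ≠ u → ¬ s <+: u

/-- Unbordered-prefix condition. -/
def UnbV (v : List α) : Prop := ∀ p : List α, p <+: v → p ≠ [] → p ≠ v → ¬ p <:+ v

/-- Decompositions for minimal SDI. -/
def DsetMin (y : List α) : Set (List α × List α × List α) :=
  {t | t ∈ Dset y ∧ UnbU t.1 ∧ UnbV t.2.2}

theorem finite_DsetMin (y : List α) : (DsetMin y).Finite :=
  (finite_Dset y).subset fun _ h => h.1

/-- Left factor for minimal SDI. -/
def Amin (q : σ) : Language α := {x₁ | M.eval x₁ = q}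

/-- Right factor for minimal SDI. -/
def Bmin (q : σ) (u v : List α) : Language α :=
  {x₂ | M.evalFrom (M.evalFrom q (u ++ v)) x₂ ∈ M.accept}

/-- One piece of the decomposition of minimal SDI into a regular language. -/
def pieceMin (y u v : List α) (q : σ) : Language α :=
  Amin M q * (({y} : Language α) * Bmin M q u v)

theorem minSdi_single_eq (y : List α) :
    {w | ∃ x ∈ M.accepts, w ∈ minSdiStr x y} =
      ⋃ d ∈ DsetMin y, ⋃ q : σ, (pieceMin M y d.1 d.2.2 q : Set (List α)) := by
  ext w
  simp only [Set.mem_setOf_eq, Set.mem_iUnion, mem_iUnion_lang]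
  constructor
  · rintro ⟨x, hx, x₁, u, z, v, x₂, hX, hY, hu, hv, hw, hU, hV⟩
    refine ⟨(u, z, v), ⟨⟨hY, hu, hv⟩, hU, hV⟩, M.eval x₁, ?_⟩
    rw [pieceMin, Language.mem_mul]
    refine ⟨x₁, rfl, y ++ x₂, ?_, ?_⟩
    · rw [Language.mem_mul]
      refine ⟨y, rfl, x₂, ?_, rfl⟩
      show M.evalFrom (M.evalFrom (M.eval x₁) (u ++ v)) x₂ ∈ M.accept
      have hEv : M.eval x = M.evalFrom (M.evalFrom (M.eval x₁) (u ++ v)) x₂ := by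
        rw [hX]
        show M.evalFrom M.start (x₁ ++ u ++ v ++ x₂) = _
        rw [show x₁ ++ u ++ v ++ x₂ = (x₁ ++ (u ++ v)) ++ x₂ by simp [List.append_assoc],
          DFA.evalFrom_of_append, DFA.evalFrom_of_append]
        rfl
      rw [← hEv]
      exact (M.mem_accepts).mp hx
    · rw [hw, hY]
      simp [List.append_assoc]
  · rintro ⟨⟨u, z, v⟩, ⟨⟨hyd, hu, hv⟩, hU, hV⟩, q, hmem⟩
    rw [pieceMin, Language.mem_mul] at hmem
    obtain ⟨x₁, hx₁, b, hb, hw⟩ := hmem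
    rw [Language.mem_mul] at hb
    obtain ⟨m, hm, x₂, hx₂, hbeq⟩ := hb
    simp only [Amin, Set.mem_setOf_eq] at hx₁
    simp only [Bmin, Set.mem_setOf_eq] at hx₂
    rw [mem_single_iff] at hm
    subst hm
    subst hbeq
    subst hw
    refine ⟨x₁ ++ u ++ v ++ x₂, ?_, x₁, u, z, v, x₂, rfl, hyd, hu, hv, ?_, hU, hV⟩
    · rw [M.mem_accepts]
      show M.evalFrom M.start (x₁ ++ u ++ v ++ x₂) ∈ _
      rw [show x₁ ++ u ++ v ++ x₂ = (x₁ ++ (u ++ v)) ++ x₂ by simp [List.append_assoc],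
        DFA.evalFrom_of_append, DFA.evalFrom_of_append]
      rw [show M.evalFrom M.start x₁ = q from hx₁]
      exact hx₂
    · rw [hyd]
      simp [List.append_assoc]

end Single2

section SingleRev

variable {α : Type}

/-- Infix-matching language: words of the form `u ++ z ++ v`. -/
def MidL (u v : List α) : Language α :=
  ({u} : Language α) * ((univL : Language α) * ({v} : Language α))

theorem mem_MidL {u v y : List α} : y ∈ MidL u v ↔ ∃ z, y = u ++ z ++ v := by
  rw [MidL, Language.mem_mul]
  constructor
  · rintro ⟨a, ha, b, hb, hab⟩
    rw [mem_single_iff] at ha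
    subst ha
    rw [Language.mem_mul] at hb
    obtain ⟨z, -, c, hc, hbc⟩ := hb
    rw [mem_single_iff] at hc
    subst hc
    exact ⟨z, by rw [← hab, ← hbc]; simp [List.append_assoc]⟩
  · rintro ⟨z, rfl⟩
    refine ⟨u, rfl, z ++ v, ?_, by simp [List.append_assoc]⟩
    rw [Language.mem_mul]
    exact ⟨z, trivial, v, rfl, rfl⟩

/-- The middle language for the reversed maximal SDI. -/
def Ymax (R : Language α) (x₁ u v x₂ : List α) : Language α :=
  {y | y ∈ R ∧ y ∈ MidL u v ∧ ∀ p ∈ Qset x₁ x₂, y ∉ MidL (p.1 ++ u) (v ++ p.2)}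

/-- One piece of the decomposition of reversed maximal SDI. -/
def pieceMaxRev (R : Language α) (x₁ u v x₂ : List α) : Language α :=
  ({x₁} : Language α) * (Ymax R x₁ u v x₂ * ({x₂} : Language α))

theorem maxSdi_singleRev_eq (R : Language α) (x : List α) :
    {w | ∃ y ∈ R, w ∈ maxSdiStr x y} =
      ⋃ t ∈ Eset x, (pieceMaxRev R t.1 t.2.1 t.2.2.1 t.2.2.2 : Set (List α)) := by
  ext w
  simp only [Set.mem_setOf_eq, Set.mem_iUnion, mem_iUnion_lang]
  constructor
  · rintro ⟨y, hy, x₁, u, z, v, x₂, hX, hY, hu, hv, hw, hmax⟩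
    refine ⟨(x₁, u, v, x₂), ⟨hX, hu, hv⟩, ?_⟩
    rw [pieceMaxRev, Language.mem_mul]
    refine ⟨x₁, rfl, y ++ x₂, ?_, ?_⟩
    · rw [Language.mem_mul]
      refine ⟨y, ?_, x₂, rfl, rfl⟩
      refine ⟨hy, mem_MidL.mpr ⟨z, hY⟩, ?_⟩
      rintro p ⟨hp1, hp2, hp3⟩ hyp
      obtain ⟨z', hz'⟩ := mem_MidL.mp hyp
      refine hmax ⟨p.1, p.2, z', hp1, hp2, hp3, ?_⟩
      rw [hz']
      simp [List.append_assoc]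
    · rw [hw, hY]
      simp [List.append_assoc]
  · rintro ⟨⟨x₁, u, v, x₂⟩, ⟨hX, hu, hv⟩, hmem⟩
    rw [pieceMaxRev, Language.mem_mul] at hmem
    obtain ⟨a, ha, b, hb, hw⟩ := hmem
    rw [mem_single_iff] at ha
    subst ha
    rw [Language.mem_mul] at hb
    obtain ⟨y, hy, c, hc, hbc⟩ := hb
    rw [mem_single_iff] at hc
    subst hc
    obtain ⟨hyR, hymid, hbad⟩ := hy
    obtain ⟨z, hz⟩ := mem_MidL.mp hymid
    refine ⟨y, hyR, a, u, z, v, c, hX, hz, hu, hv, ?_, ?_⟩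
    · rw [← hw, ← hbc, hz]
      simp [List.append_assoc]
    · rintro ⟨a', b', z', ha', hb', hne, heq⟩
      refine hbad (a', b') ⟨ha', hb', hne⟩ (mem_MidL.mpr ⟨z', ?_⟩)
      rw [heq]
      simp [List.append_assoc]

/-- The middle language for the reversed minimal SDI. -/
def Ymin (R : Language α) (u v : List α) : Language α :=
  {y | y ∈ R ∧ y ∈ MidL u v}

/-- Decompositions for reversed minimal SDI. -/
def EsetMin (x : List α) : Set (List α × List α × List α × List α) :=
  {t | t ∈ Eset x ∧ UnbU t.2.1 ∧ UnbV t.2.2.1}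

theorem finite_EsetMin (x : List α) : (EsetMin x).Finite :=
  (finite_Eset x).subset fun _ h => h.1

/-- One piece of the decomposition of reversed minimal SDI. -/
def pieceMinRev (R : Language α) (x₁ u v x₂ : List α) : Language α :=
  ({x₁} : Language α) * (Ymin R u v * ({x₂} : Language α))

theorem minSdi_singleRev_eq (R : Language α) (x : List α) :
    {w | ∃ y ∈ R, w ∈ minSdiStr x y} =
      ⋃ t ∈ EsetMin x, (pieceMinRev R t.1 t.2.1 t.2.2.1 t.2.2.2 : Set (List α)) := by
  ext w
  simp only [Set.mem_setOf_eq, Set.mem_iUnion, mem_iUnion_lang]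
  constructor
  · rintro ⟨y, hy, x₁, u, z, v, x₂, hX, hY, hu, hv, hw, hU, hV⟩
    refine ⟨(x₁, u, v, x₂), ⟨⟨hX, hu, hv⟩, hU, hV⟩, ?_⟩
    rw [pieceMinRev, Language.mem_mul]
    refine ⟨x₁, rfl, y ++ x₂, ?_, ?_⟩
    · rw [Language.mem_mul]
      exact ⟨y, ⟨hy, mem_MidL.mpr ⟨z, hY⟩⟩, x₂, rfl, rfl⟩
    · rw [hw, hY]
      simp [List.append_assoc]
  · rintro ⟨⟨x₁, u, v, x₂⟩, ⟨⟨hX, hu, hv⟩, hU, hV⟩, hmem⟩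
    rw [pieceMinRev, Language.mem_mul] at hmem
    obtain ⟨a, ha, b, hb, hw⟩ := hmem
    rw [mem_single_iff] at ha
    subst ha
    rw [Language.mem_mul] at hb
    obtain ⟨y, hy, c, hc, hbc⟩ := hb
    rw [mem_single_iff] at hc
    subst hc
    obtain ⟨hyR, hymid⟩ := hy
    obtain ⟨z, hz⟩ := mem_MidL.mp hymid
    refine ⟨y, hyR, a, u, z, v, c, hX, hz, hu, hv, ?_, hU, hV⟩
    rw [← hw, ← hbc, hz]
    simp [List.append_assoc]

end SingleRev

section PieceReg

variable {α : Type} {σ : Type}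

theorem isRegular_evalTo [Fintype σ] (M : DFA α σ) (q : σ) :
    Language.IsRegular {x : List α | M.eval x = q} := by
  have he : (DFA.mk M.step M.start {q} : DFA α σ).accepts = {x : List α | M.eval x = q} := rfl
  exact he ▸ isRegular_of_dfa _

theorem isRegular_evalFromTo [Fintype σ] (M : DFA α σ) (s0 : σ) :
    Language.IsRegular {x : List α | M.evalFrom s0 x ∈ M.accept} := by
  have he : (DFA.mk M.step s0 M.accept : DFA α σ).accepts
      = {x : List α | M.evalFrom s0 x ∈ M.accept} := rfl
  exact he ▸ isRegular_of_dfa _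

theorem isRegular_Amax [Fintype σ] (M : DFA α σ) (q : σ) {T : Set (List α × List α)}
    (hT : T.Finite) : (Amax M q T).IsRegular := by
  have he : (Amax M q T : Set (List α)) =
      ({x : List α | M.eval x = q} ∩ ⋂ p ∈ T, ({x : List α | p.1 <:+ x}ᶜ : Set (List α))) := by
    ext x
    constructor
    · rintro ⟨h1, h2⟩
      exact ⟨h1, Set.mem_iInter₂.mpr h2⟩
    · rintro ⟨h1, h2⟩
      exact ⟨h1, fun p hp => Set.mem_iInter₂.mp h2 p hp⟩
  rw [he]
  exact isRegular_inter (isRegular_evalTo M q)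
    (isRegular_biInter hT fun p _ => isRegular_compl (isRegular_hasSuffix p.1))

theorem isRegular_Bmax [Fintype σ] (M : DFA α σ) (q : σ) (y u v : List α)
    (T : Set (List α × List α)) : (Bmax M q y u v T).IsRegular := by
  have he : (Bmax M q y u v T : Set (List α)) =
      ({x : List α | M.evalFrom (M.evalFrom q (u ++ v)) x ∈ M.accept} ∩
        ⋂ p ∈ Pset y u v \ T, ({x : List α | p.2 <+: x}ᶜ : Set (List α))) := by
    ext x
    constructor
    · rintro ⟨h1, h2⟩
      exact ⟨h1, Set.mem_iInter₂.mpr h2⟩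
    · rintro ⟨h1, h2⟩
      exact ⟨h1, fun p hp => Set.mem_iInter₂.mp h2 p hp⟩
  rw [he]
  refine isRegular_inter ?_
    (isRegular_biInter ((finite_Pset y u v).diff (t := T)) fun p _ =>
      isRegular_compl (isRegular_hasPrefix p.2))
  have he2 : (DFA.mk M.step (M.evalFrom q (u ++ v)) M.accept : DFA α σ).accepts
      = {x : List α | M.evalFrom (M.evalFrom q (u ++ v)) x ∈ M.accept} := rfl
  exact he2 ▸ isRegular_of_dfa _

theorem isRegular_pieceMax [Fintype σ] (M : DFA α σ) (y u v : List α)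
    {T : Set (List α × List α)} (hT : T.Finite) (q : σ) :
    (pieceMax M y u v T q).IsRegular :=
  isRegular_mul (isRegular_Amax M q hT)
    (isRegular_mul (isRegular_single y) (isRegular_Bmax M q y u v T))

theorem isRegular_pieceMin [Fintype σ] (M : DFA α σ) (y u v : List α) (q : σ) :
    (pieceMin M y u v q).IsRegular := by
  refine isRegular_mul ?_ (isRegular_mul (isRegular_single y) ?_)
  · have he : (DFA.mk M.step M.start {q} : DFA α σ).accepts = Amin M q := rfl
    exact he ▸ isRegular_of_dfa _
  · have he : (DFA.mk M.step (M.evalFrom q (u ++ v)) M.accept : DFA α σ).accepts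
        = Bmin M q u v := rfl
    exact he ▸ isRegular_of_dfa _

theorem isRegular_MidL (u v : List α) : (MidL u v).IsRegular :=
  isRegular_mul (isRegular_single u) (isRegular_mul isRegular_univL (isRegular_single v))

theorem isRegular_Ymax {R : Language α} (hR : R.IsRegular) (x₁ u v x₂ : List α) :
    (Ymax R x₁ u v x₂).IsRegular := by
  have he : (Ymax R x₁ u v x₂ : Set (List α)) =
      ((R ∩ MidL u v : Set (List α)) ∩
        ⋂ p ∈ Qset x₁ x₂, ((MidL (p.1 ++ u) (v ++ p.2) : Set (List α))ᶜ : Set (List α))) := by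
    ext y
    constructor
    · rintro ⟨h1, h2, h3⟩
      exact ⟨⟨h1, h2⟩, Set.mem_iInter₂.mpr h3⟩
    · rintro ⟨⟨h1, h2⟩, h3⟩
      exact ⟨h1, h2, fun p hp => Set.mem_iInter₂.mp h3 p hp⟩
  rw [he]
  exact isRegular_inter (isRegular_inter hR (isRegular_MidL u v))
    (isRegular_biInter (finite_Qset x₁ x₂) fun p _ => isRegular_compl (isRegular_MidL _ _))

theorem isRegular_Ymin {R : Language α} (hR : R.IsRegular) (u v : List α) :
    (Ymin R u v).IsRegular := by
  have he : (Ymin R u v : Set (List α)) = (R ∩ MidL u v : Set (List α)) := by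
    ext y
    exact Iff.rfl
  rw [he]
  exact isRegular_inter hR (isRegular_MidL u v)

theorem isRegular_pieceMaxRev {R : Language α} (hR : R.IsRegular) (x₁ u v x₂ : List α) :
    (pieceMaxRev R x₁ u v x₂).IsRegular :=
  isRegular_mul (isRegular_single x₁)
    (isRegular_mul (isRegular_Ymax hR x₁ u v x₂) (isRegular_single x₂))

theorem isRegular_pieceMinRev {R : Language α} (hR : R.IsRegular) (x₁ u v x₂ : List α) :
    (pieceMinRev R x₁ u v x₂).IsRegular :=
  isRegular_mul (isRegular_single x₁)
    (isRegular_mul (isRegular_Ymin hR u v) (isRegular_single x₂))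

end PieceReg

end SdiReg

open SdiReg

/-- Maximal/minimal SDI of a finite language into a regular language
(and vice versa) is regular. -/
theorem maxMinSdi_finite_regular {α : Type} (R L : Language α)
    (hR : R.IsRegular) (hL : Set.Finite (L : Set (List α))) :
    Language.IsRegular (maxSdiLang R L) ∧ Language.IsRegular (minSdiLang R L) ∧
    Language.IsRegular (maxSdiLang L R) ∧ Language.IsRegular (minSdiLang L R) := by
  have hRc := hR
  obtain ⟨σ, ftσ, M, hM⟩ := hR
  haveI : Finite σ := Finite.of_fintype σ
  refine ⟨?_, ?_, ?_, ?_⟩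
  · have h1 : maxSdiLang (R : Set (List α)) (L : Set (List α))
        = ⋃ y ∈ (L : Set (List α)), {w | ∃ x ∈ M.accepts, w ∈ maxSdiStr x y} := by
      rw [hM]
      ext w
      constructor
      · rintro ⟨x, hx, y, hy, hw⟩
        exact Set.mem_biUnion hy ⟨x, hx, hw⟩
      · intro hw
        obtain ⟨y, hy, x, hx, hw'⟩ := Set.mem_iUnion₂.mp hw
        exact ⟨x, hx, y, hy, hw'⟩
    rw [h1]
    apply isRegular_biUnion hL
    intro y hy
    rw [maxSdi_single_eq M y]
    apply isRegular_biUnion (finite_Dset y)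
    rintro ⟨u, z, v⟩ hd
    apply isRegular_biUnion (finite_Pset y u v).finite_subsets
    intro T hT
    apply isRegular_iUnion
    intro q
    exact isRegular_pieceMax M y u v ((finite_Pset y u v).subset hT) q
  · have h1 : minSdiLang (R : Set (List α)) (L : Set (List α))
        = ⋃ y ∈ (L : Set (List α)), {w | ∃ x ∈ M.accepts, w ∈ minSdiStr x y} := by
      rw [hM]
      ext w
      constructor
      · rintro ⟨x, hx, y, hy, hw⟩
        exact Set.mem_biUnion hy ⟨x, hx, hw⟩
      · intro hw
        obtain ⟨y, hy, x, hx, hw'⟩ := Set.mem_iUnion₂.mp hw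
        exact ⟨x, hx, y, hy, hw'⟩
    rw [h1]
    apply isRegular_biUnion hL
    intro y hy
    rw [minSdi_single_eq M y]
    apply isRegular_biUnion (finite_DsetMin y)
    rintro ⟨u, z, v⟩ hd
    apply isRegular_iUnion
    intro q
    exact isRegular_pieceMin M y u v q
  · have h1 : maxSdiLang (L : Set (List α)) (R : Set (List α))
        = ⋃ x ∈ (L : Set (List α)), {w | ∃ y ∈ R, w ∈ maxSdiStr x y} := by
      ext w
      constructor
      · rintro ⟨x, hx, y, hy, hw⟩
        exact Set.mem_biUnion hx ⟨y, hy, hw⟩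
      · intro hw
        obtain ⟨x, hx, y, hy, hw'⟩ := Set.mem_iUnion₂.mp hw
        exact ⟨x, hx, y, hy, hw'⟩
    rw [h1]
    apply isRegular_biUnion hL
    intro x hx
    rw [maxSdi_singleRev_eq R x]
    apply isRegular_biUnion (finite_Eset x)
    rintro ⟨x₁, u, v, x₂⟩ ht
    exact isRegular_pieceMaxRev hRc x₁ u v x₂
  · have h1 : minSdiLang (L : Set (List α)) (R : Set (List α))
        = ⋃ x ∈ (L : Set (List α)), {w | ∃ y ∈ R, w ∈ minSdiStr x y} := by
      ext w
      constructor
      · rintro ⟨x, hx, y, hy, hw⟩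
        exact Set.mem_biUnion hx ⟨y, hy, hw⟩
      · intro hw
        obtain ⟨x, hx, y, hy, hw'⟩ := Set.mem_iUnion₂.mp hw
        exact ⟨x, hx, y, hy, hw'⟩
    rw [h1]
    apply isRegular_biUnion hL
    intro x hx
    rw [minSdi_singleRev_eq R x]
    apply isRegular_biUnion (finite_EsetMin x)
    rintro ⟨x₁, u, v, x₂⟩ ht
    exact isRegular_pieceMinRev hRc x₁ u v x₂
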